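/- Let q ∈ ℍ with ‖q‖ < 1 and α ∈ ℍ. If the slice 2-form satisfies Ω_q(α, β) = 0 for every β ∈ ℍ, then α = 0. -/

import Mathlib

/-- The slice Hermitian metric of the quaternionic unit ball. -/
noncomputable def sliceHermitian (q α β : Quaternion ℝ) : Quaternion ℝ :=
  ((1 - ‖q‖ ^ 2) ^ 2)⁻¹ •
    ((1 - q ^ 2)⁻¹ * (α - q * α * q) * star (β - q * β * q) * (1 - star q ^ 2)⁻¹)

/-- The slice 2-form (slice Kähler form) of the quaternionic unit ball. -/
noncomputable def sliceTwoForm (q α β : Quaternion ℝ) : Quaternion ℝ :=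
  (sliceHermitian q α β).im

/-- non-degeneracy of the slice 2-form: if `Ω_q(α, β) = 0` for every `β`,
then `α = 0`. -/
theorem sliceTwoForm_nondegenerate (q : Quaternion ℝ) (hq : ‖q‖ < 1) (α : Quaternion ℝ)
    (h : ∀ β : Quaternion ℝ, sliceTwoForm q α β = 0) : α = 0 := by
  by_contra hα
  have hq2 : ‖q‖ ^ 2 < 1 := by nlinarith [norm_nonneg q]
  have hA : (1 - q ^ 2 : Quaternion ℝ) ≠ 0 := by
    intro h0
    have hq1 : q ^ 2 = 1 := by rwa [sub_eq_zero, eq_comm] at h0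
    have : ‖q‖ ^ 2 = 1 := by
      have := congrArg norm hq1
      simpa [norm_pow] using this
    linarith
  have hC : (1 - star q ^ 2 : Quaternion ℝ) ≠ 0 := by
    intro h0
    have hq1 : (star q) ^ 2 = 1 := by rwa [sub_eq_zero, eq_comm] at h0
    have : ‖q‖ ^ 2 = 1 := by
      have := congrArg norm hq1
      simpa [norm_pow, norm_star] using this
    linarith
  have hT : (α - q * α * q : Quaternion ℝ) ≠ 0 := by
    intro h0
    have hα1 : α = q * α * q := by rwa [sub_eq_zero] at h0
    have hn : ‖α‖ = ‖q‖ ^ 2 * ‖α‖ := by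
      calc ‖α‖ = ‖q * α * q‖ := by rw [← hα1]
        _ = ‖q‖ ^ 2 * ‖α‖ := by rw [norm_mul, norm_mul]; ring
    have hα0 : 0 < ‖α‖ := norm_pos_iff.mpr hα
    nlinarith
  set x : Quaternion ℝ := (1 - q ^ 2)⁻¹ * (α - q * α * q) with hxdef
  have hx : x ≠ 0 := mul_ne_zero (inv_ne_zero hA) hT
  set i : Quaternion ℝ := ⟨0, 1, 0, 0⟩ with hidef
  -- the ℝ-linear map β ↦ β - qβq
  let f : Quaternion ℝ →ₗ[ℝ] Quaternion ℝ :=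
    { toFun := fun β => β - q * β * q
      map_add' := by intro a b; noncomm_ring
      map_smul' := by
        intro r a
        simp [smul_sub, mul_smul_comm, smul_mul_assoc] }
  have finj : Function.Injective f := by
    rw [injective_iff_map_eq_zero]
    intro β hβ
    have hβ1 : β = q * β * q := by
      have : β - q * β * q = 0 := hβ
      rwa [sub_eq_zero] at this
    by_contra hβ0
    have hn : ‖β‖ = ‖q‖ ^ 2 * ‖β‖ := by
      calc ‖β‖ = ‖q * β * q‖ := by rw [← hβ1]
        _ = ‖q‖ ^ 2 * ‖β‖ := by rw [norm_mul, norm_mul]; ring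
    have hβp : 0 < ‖β‖ := norm_pos_iff.mpr hβ0
    nlinarith
  have fsurj : Function.Surjective f := LinearMap.injective_iff_surjective.mp finj
  obtain ⟨β, hβ⟩ := fsurj (star (x⁻¹ * i * (1 - star q ^ 2)))
  have hβ' : β - q * β * q = star (x⁻¹ * i * (1 - star q ^ 2)) := hβ
  have key : (1 - q ^ 2 : Quaternion ℝ)⁻¹ * (α - q * α * q) * star (β - q * β * q) *
      (1 - star q ^ 2)⁻¹ = i := by
    rw [hβ', star_star, ← hxdef]
    rw [show x * (x⁻¹ * i * (1 - star q ^ 2)) * (1 - star q ^ 2)⁻¹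
        = (x * x⁻¹) * i * ((1 - star q ^ 2) * (1 - star q ^ 2)⁻¹) by noncomm_ring]
    rw [mul_inv_cancel₀ hx, mul_inv_cancel₀ hC, one_mul, mul_one]
  have h0 := h β
  rw [sliceTwoForm, sliceHermitian, key] at h0
  have h1 := congrArg QuaternionAlgebra.imI h0
  simp [hidef] at h1
  have h2 : ((1 - ‖q‖ ^ 2) ^ 2)⁻¹ * (1:ℝ) = 0 := h1
  have h3 : ((1 - ‖q‖ ^ 2) ^ 2 : ℝ) ≠ 0 := pow_ne_zero 2 (by linarith)
  exact (inv_ne_zero h3) (by simpa using h2)
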